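/- arXiv:2011.11494 — 2 statements merged into one kernel-verified Lean document; each statement's English description precedes it below -/
import Mathlib

section
/- For x in the open unit ball of ℝ^{m+1} and y in the closed unit ball, T_{-x}(T_x(y)) = y; that is, T_{-x} is the inverse of T_x on the closed unit ball. -/
open scoped RealInnerProductSpace

/-- The Möbius transformation of the ball with parameter `x`. -/
noncomputable def mobiusT {n : ℕ} (x y : EuclideanSpace ℝ (Fin n)) :
    EuclideanSpace ℝ (Fin n) :=
  (1 + 2 * ⟪x, y⟫ + ‖x‖ ^ 2 * ‖y‖ ^ 2)⁻¹ •
    ((1 + 2 * ⟪x, y⟫ + ‖y‖ ^ 2) • x + (1 - ‖x‖ ^ 2) • y)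

private lemma norm_sq_combo {n : ℕ} (x y : EuclideanSpace ℝ (Fin n)) (c d : ℝ) :
    ‖c • x + d • y‖ ^ 2 = c ^ 2 * ‖x‖ ^ 2 + 2 * c * d * ⟪x, y⟫ + d ^ 2 * ‖y‖ ^ 2 := by
  rw [← real_inner_self_eq_norm_sq, ← real_inner_self_eq_norm_sq,
    ← real_inner_self_eq_norm_sq]
  simp only [inner_add_left, inner_add_right, real_inner_smul_left, real_inner_smul_right]
  rw [real_inner_comm y x]
  ring

/-- `T_{-x}` inverts `T_x` on the closed unit ball. -/
theorem mobiusT_neg_inverse (m : ℕ) (hm : 1 ≤ m)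
    (x y : EuclideanSpace ℝ (Fin (m + 1))) (hx : ‖x‖ < 1) (hy : ‖y‖ ≤ 1) :
    mobiusT (-x) (mobiusT x y) = y := by
  have hxn : 0 ≤ ‖x‖ := norm_nonneg x
  have hyn : 0 ≤ ‖y‖ := norm_nonneg y
  have hcs : |⟪x, y⟫| ≤ ‖x‖ * ‖y‖ := abs_real_inner_le_norm x y
  have habs := abs_le.1 hcs
  have ht : ‖x‖ * ‖y‖ < 1 := by nlinarith
  have hXlt : ‖x‖ ^ 2 < 1 := by nlinarith
  have hD : 0 < 1 + 2 * ⟪x, y⟫ + ‖x‖ ^ 2 * ‖y‖ ^ 2 := by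
    nlinarith [sq_nonneg (1 - ‖x‖ * ‖y‖), habs.1]
  set a : ℝ := ⟪x, y⟫ with ha
  set X : ℝ := ‖x‖ ^ 2 with hXd
  set Y : ℝ := ‖y‖ ^ 2 with hYd
  have hD' : (1 + 2 * a + X * Y) ≠ 0 := ne_of_gt hD
  set c : ℝ := (1 + 2 * a + X * Y)⁻¹ * (1 + 2 * a + Y) with hc
  set d : ℝ := (1 + 2 * a + X * Y)⁻¹ * (1 - X) with hd
  have hT : mobiusT x y = c • x + d • y := by
    rw [mobiusT, ← ha, ← hXd, ← hYd, hc, hd]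
    module
  have hip : ⟪-x, mobiusT x y⟫ = -(c * X + d * a) := by
    rw [hT]
    simp only [inner_neg_left, inner_add_right, real_inner_smul_right,
      real_inner_self_eq_norm_sq]
    rw [← ha, ← hXd]
    ring
  have hns : ‖mobiusT x y‖ ^ 2 = c ^ 2 * X + 2 * c * d * a + d ^ 2 * Y := by
    rw [hT, norm_sq_combo, ← ha, ← hXd, ← hYd]
  clear_value a X Y
  have h1X : (0:ℝ) < 1 - X := by linarith
  have hE : (1 : ℝ) + 2 * (-(c * X + d * a)) +
      X * (c ^ 2 * X + 2 * c * d * a + d ^ 2 * Y) =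
      (1 - X) ^ 2 / (1 + 2 * a + X * Y) := by
    rw [hc, hd]
    field_simp
    ring
  have hE0 : (1 : ℝ) + 2 * (-(c * X + d * a)) +
      X * (c ^ 2 * X + 2 * c * d * a + d ^ 2 * Y) ≠ 0 := by
    rw [hE]
    exact ne_of_gt (div_pos (pow_pos h1X 2) hD)
  rw [show mobiusT (-x) (mobiusT x y) =
      (1 + 2 * ⟪-x, mobiusT x y⟫ + ‖-x‖ ^ 2 * ‖mobiusT x y‖ ^ 2)⁻¹ •
        ((1 + 2 * ⟪-x, mobiusT x y⟫ + ‖mobiusT x y‖ ^ 2) • (-x) +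
          (1 - ‖-x‖ ^ 2) • mobiusT x y) from rfl,
    norm_neg, ← hXd, hip, hns, hT]
  match_scalars <;> simp only [hE] <;> simp only [hc, hd] <;> field_simp <;> ring
end

section
/- For a unit vector p ∈ S^m and t ∈ [0,1), the image of the hemisphere H_p = {y ∈ S^m : y·p ≤ 0} under the Möbius transformation T_{pt} is exactly the spherical cap {y ∈ S^m : y·p ≤ 2t/(1+t²)}. -/
open scoped RealInnerProductSpace

lemma mobiusT_smul_eq {n : ℕ} (p y : EuclideanSpace ℝ (Fin n)) (hp : ‖p‖ = 1)
    (hy : ‖y‖ = 1) (c s : ℝ) (hs : ⟪p, y⟫ = s) :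
    mobiusT (c • p) y = (1 + 2 * (c * s) + c ^ 2)⁻¹ •
      ((2 + 2 * (c * s)) • (c • p) + (1 - c ^ 2) • y) := by
  have h1 : ‖c • p‖ ^ 2 = c ^ 2 := by
    rw [norm_smul, hp, mul_one, Real.norm_eq_abs, sq_abs]
  simp only [mobiusT, real_inner_smul_left, h1, hy, hs, one_pow, mul_one]
  match_scalars <;> ring

lemma denom_pos (c s : ℝ) (hc : |c| < 1) (hs : |s| ≤ 1) :
    0 < 1 + 2 * (c * s) + c ^ 2 := by
  have h1 : |c * s| ≤ |c| := by
    rw [abs_mul]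
    nlinarith [abs_nonneg c]
  have h2 := abs_le.mp h1
  nlinarith [abs_nonneg c, sq_abs c]

lemma abs_inner_le_one {n : ℕ} (p y : EuclideanSpace ℝ (Fin n)) (hp : ‖p‖ = 1)
    (hy : ‖y‖ = 1) : |⟪p, y⟫| ≤ 1 := by
  simpa [hp, hy] using abs_real_inner_le_norm p y

lemma mobiusT_norm {n : ℕ} (p y : EuclideanSpace ℝ (Fin n)) (hp : ‖p‖ = 1)
    (hy : ‖y‖ = 1) (c s : ℝ) (hs : ⟪p, y⟫ = s) (hc : |c| < 1) :
    ‖mobiusT (c • p) y‖ = 1 := by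
  have hD := denom_pos c s hc (hs ▸ abs_inner_le_one p y hp hy)
  have hpp : ⟪p, p⟫ = 1 := by rw [real_inner_self_eq_norm_sq, hp]; norm_num
  have hyy : ⟪y, y⟫ = 1 := by rw [real_inner_self_eq_norm_sq, hy]; norm_num
  have hs' : ⟪y, p⟫ = s := by rw [real_inner_comm]; exact hs
  have h2 : ‖mobiusT (c • p) y‖ ^ 2 = 1 := by
    rw [← real_inner_self_eq_norm_sq, mobiusT_smul_eq p y hp hy c s hs]
    simp only [inner_add_left, inner_add_right, real_inner_smul_left, real_inner_smul_right,
      hpp, hyy, hs, hs']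
    field_simp [show (1 + 2 * c * s + c ^ 2 : ℝ) ≠ 0 by rw [mul_assoc]; exact hD.ne']
    ring
  have h3 : (‖mobiusT (c • p) y‖ - 1) * (‖mobiusT (c • p) y‖ + 1) = 0 := by nlinarith
  rcases mul_eq_zero.mp h3 with h | h
  · linarith
  · nlinarith [norm_nonneg (mobiusT (c • p) y)]

lemma mobiusT_inner {n : ℕ} (p y : EuclideanSpace ℝ (Fin n)) (hp : ‖p‖ = 1)
    (hy : ‖y‖ = 1) (c s : ℝ) (hs : ⟪p, y⟫ = s) :
    ⟪p, mobiusT (c • p) y⟫ = (2 * c * (1 + c * s) + s * (1 - c ^ 2)) /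
      (1 + 2 * (c * s) + c ^ 2) := by
  have hpp : ⟪p, p⟫ = 1 := by rw [real_inner_self_eq_norm_sq, hp]; norm_num
  rw [mobiusT_smul_eq p y hp hy c s hs]
  simp only [inner_add_right, real_inner_smul_right, hpp, hs]
  field_simp

lemma mobiusT_inverse {n : ℕ} (p z : EuclideanSpace ℝ (Fin n)) (hp : ‖p‖ = 1)
    (hz : ‖z‖ = 1) (c s : ℝ) (hs : ⟪p, z⟫ = s) (hc : |c| < 1) :
    mobiusT ((-c) • p) (mobiusT (c • p) z) = z := by
  have hE := denom_pos c s hc (hs ▸ abs_inner_le_one p z hp hz)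
  have hun : ‖mobiusT (c • p) z‖ = 1 := mobiusT_norm p z hp hz c s hs hc
  have hpu : ⟪p, mobiusT (c • p) z⟫ = (2 * c * (1 + c * s) + s * (1 - c ^ 2)) /
      (1 + 2 * (c * s) + c ^ 2) := mobiusT_inner p z hp hz c s hs
  have hc2 : (1 - c ^ 2) ≠ 0 := by
    have := abs_lt.mp hc; nlinarith
  rw [mobiusT_smul_eq p (mobiusT (c • p) z) hp hun (-c) ⟪p, mobiusT (c • p) z⟫ rfl]
  have hA : (1 + 2 * (-c * ⟪p, mobiusT (c • p) z⟫) + (-c) ^ 2 : ℝ)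
      = (1 - c ^ 2) ^ 2 / (1 + 2 * (c * s) + c ^ 2) := by
    rw [hpu]; field_simp [show (1 + 2 * c * s + c ^ 2 : ℝ) ≠ 0 by rw [mul_assoc]; exact hE.ne']; ring
  have hB : (2 + 2 * (-c * ⟪p, mobiusT (c • p) z⟫) : ℝ)
      = 2 * (1 + c * s) * (1 - c ^ 2) / (1 + 2 * (c * s) + c ^ 2) := by
    rw [hpu]; field_simp [show (1 + 2 * c * s + c ^ 2 : ℝ) ≠ 0 by rw [mul_assoc]; exact hE.ne']; ring
  rw [hA, hB, mobiusT_smul_eq p z hp hz c s hs]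
  match_scalars
  · field_simp
    ring
  · field_simp [hE.ne', show (1 + c * 2 * s + c ^ 2 : ℝ) ≠ 0 by intro h; apply hE.ne'; linarith]

/-- the image of the hemisphere `{y ∈ Sᵐ : y·p ≤ 0}` under `T_{tp}`
is the spherical cap `{y ∈ Sᵐ : y·p ≤ 2t/(1+t²)}`. -/
theorem mobiusT_image_hemisphere (m : ℕ) (hm : 1 ≤ m)
    (p : EuclideanSpace ℝ (Fin (m + 1))) (hp : ‖p‖ = 1) (t : ℝ)
    (ht : t ∈ Set.Ico (0 : ℝ) 1) :
    mobiusT (t • p) '' {y | y ∈ Metric.sphere (0 : EuclideanSpace ℝ (Fin (m + 1))) 1 ∧ ⟪y, p⟫ ≤ 0}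
      = {y | y ∈ Metric.sphere (0 : EuclideanSpace ℝ (Fin (m + 1))) 1 ∧
          ⟪y, p⟫ ≤ 2 * t / (1 + t ^ 2)} := by
  obtain ⟨ht0, ht1⟩ := ht
  have htabs : |t| < 1 := by rw [abs_of_nonneg ht0]; exact ht1
  have htabs' : |(-t)| < 1 := by rwa [abs_neg]
  have ht2 : (0:ℝ) < 1 + t ^ 2 := by positivity
  ext z
  simp only [Set.mem_image, Set.mem_setOf_eq, mem_sphere_iff_norm, sub_zero]
  constructor
  · rintro ⟨y, ⟨hy1, hy2⟩, rfl⟩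
    have hs2 : ⟪p, y⟫ ≤ 0 := by rwa [real_inner_comm]
    have hD := denom_pos t ⟪p, y⟫ htabs (abs_inner_le_one p y hp hy1)
    refine ⟨mobiusT_norm p y hp hy1 t ⟪p, y⟫ rfl htabs, ?_⟩
    rw [real_inner_comm, mobiusT_inner p y hp hy1 t ⟪p, y⟫ rfl]
    rw [div_le_div_iff₀ hD ht2]
    nlinarith [mul_nonneg (neg_nonneg.mpr hs2) (sq_nonneg (1 - t ^ 2))]
  · rintro ⟨hz1, hz2⟩
    refine ⟨mobiusT ((-t) • p) z, ⟨mobiusT_norm p z hp hz1 (-t) ⟪p, z⟫ rfl htabs', ?_⟩, ?_⟩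
    · rw [real_inner_comm, mobiusT_inner p z hp hz1 (-t) ⟪p, z⟫ rfl]
      have hE := denom_pos (-t) ⟪p, z⟫ htabs' (abs_inner_le_one p z hp hz1)
      rw [div_nonpos_iff]
      right
      have hs2 : ⟪p, z⟫ ≤ 2 * t / (1 + t ^ 2) := by rwa [real_inner_comm]
      have hs3 : ⟪p, z⟫ * (1 + t ^ 2) ≤ 2 * t := by
        rw [← le_div_iff₀ ht2]; exact hs2
      exact ⟨by nlinarith, le_of_lt hE⟩
    · have h := mobiusT_inverse p z hp hz1 (-t) ⟪p, z⟫ rfl htabs'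
      simpa using h
end
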